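/- Let A and B be m×n complex matrices with rank(B) = rank(A), and let E = B − A. Define ε₁ := ‖A†‖₂²‖B†‖₂²·(‖E‖_F² − max{‖BB†EA†‖_F²/‖A†‖₂², ‖B†EA†A‖_F²/‖B†‖₂²}) and ε₂ := ‖A†‖₂²‖B†‖₂²·(‖E‖_F² − max{‖AA†EB†‖_F²/‖B†‖₂², ‖A†EB†B‖_F²/‖A†‖₂²}). Then ‖B† − A†‖_F² ≤ min{ε₁ + ‖B†EA†‖_F², ε₂ + ‖A†EB†‖_F²}. -/

import Mathlib

open Matrix

/-- The square of the Frobenius norm of a complex matrix. -/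
noncomputable def frobSq {α β : Type*} [Fintype α] [Fintype β] (M : Matrix α β ℂ) : ℝ :=
  ∑ i, ∑ j, ‖M i j‖ ^ 2

/-- The spectral norm (ℓ²-operator norm) of a complex matrix. -/
noncomputable def spec {α β : Type*} [Fintype α] [Fintype β] [DecidableEq β]
    (M : Matrix α β ℂ) : ℝ :=
  ‖LinearMap.toContinuousLinearMap (Matrix.toEuclideanLin M)‖

/-- `X` is the Moore–Penrose inverse of `M` (the four Penrose equations). -/
def IsMoorePenrose {α β : Type*} [Fintype α] [Fintype β]
    (M : Matrix α β ℂ) (X : Matrix β α ℂ) : Prop :=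
  M * X * M = M ∧ X * M * X = X ∧ (M * X)ᴴ = M * X ∧ (X * M)ᴴ = X * M

open scoped Matrix.Norms.L2Operator

variable {α β γ : Type*} [Fintype α] [Fintype β] [Fintype γ]

lemma spec_eq_norm [DecidableEq β] (M : Matrix α β ℂ) : spec M = ‖M‖ := rfl

lemma frobSq_nonneg (M : Matrix α β ℂ) : 0 ≤ frobSq M :=
  Finset.sum_nonneg fun _ _ => Finset.sum_nonneg fun _ _ => by positivity

lemma frobSq_neg (M : Matrix α β ℂ) : frobSq (-M) = frobSq M := by simp [frobSq]

lemma frobSq_conjTranspose (M : Matrix α β ℂ) : frobSq Mᴴ = frobSq M := by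
  rw [frobSq, Finset.sum_comm]
  simp [frobSq, conjTranspose_apply]

lemma frobSq_eq_re_trace (M : Matrix α β ℂ) : frobSq M = (Matrix.trace (Mᴴ * M)).re := by
  rw [frobSq, Finset.sum_comm]
  simp only [Matrix.trace, Matrix.diag, Matrix.mul_apply, Matrix.conjTranspose_apply,
    Complex.re_sum]
  refine Finset.sum_congr rfl fun j _ => Finset.sum_congr rfl fun i _ => ?_
  rw [Complex.star_def, Complex.conj_mul']
  simp [← Complex.ofReal_pow, ← Complex.sq_norm]

lemma frobSq_add_of_orth {M N : Matrix α β ℂ} (h : Matrix.trace (Mᴴ * N) = 0) :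
    frobSq (M + N) = frobSq M + frobSq N := by
  have hNM : Matrix.trace (Nᴴ * M) = 0 := by
    have : Nᴴ * M = (Mᴴ * N)ᴴ := by simp [conjTranspose_mul]
    rw [this, trace_conjTranspose, h, star_zero]
  rw [frobSq_eq_re_trace, frobSq_eq_re_trace, frobSq_eq_re_trace]
  rw [conjTranspose_add, Matrix.add_mul, Matrix.mul_add, Matrix.mul_add, trace_add, trace_add, trace_add, h, hNM]
  simp

lemma spec_nonneg [DecidableEq β] (M : Matrix α β ℂ) : 0 ≤ spec M := norm_nonneg _

lemma spec_pos [DecidableEq β] {M : Matrix α β ℂ} (h : M ≠ 0) : 0 < spec M := by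
  rw [spec_eq_norm]
  exact norm_pos_iff.mpr h

lemma spec_conjTranspose [DecidableEq α] [DecidableEq β] (M : Matrix α β ℂ) :
    spec Mᴴ = spec M := by
  rw [spec_eq_norm, spec_eq_norm]
  exact Matrix.l2_opNorm_conjTranspose M

lemma sum_norm_mulVec_sq [DecidableEq β] (X : Matrix α β ℂ) (v : β → ℂ) :
    ∑ i, ‖(X *ᵥ v) i‖ ^ 2 ≤ spec X ^ 2 * ∑ j, ‖v j‖ ^ 2 := by
  have h := Matrix.l2_opNorm_mulVec X ((EuclideanSpace.equiv β ℂ).symm v)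
  have h2 : Real.sqrt (∑ i, ‖(X *ᵥ v) i‖ ^ 2) ≤ ‖X‖ * Real.sqrt (∑ j, ‖v j‖ ^ 2) := by
    simpa [EuclideanSpace.norm_eq] using h
  have h3 := pow_le_pow_left₀ (Real.sqrt_nonneg _) h2 2
  rw [Real.sq_sqrt (by positivity), mul_pow, Real.sq_sqrt (by positivity)] at h3
  rw [spec_eq_norm]
  exact h3

lemma frobSq_mul_left [DecidableEq β] (X : Matrix α β ℂ) (M : Matrix β γ ℂ) :
    frobSq (X * M) ≤ spec X ^ 2 * frobSq M := by
  rw [frobSq, Finset.sum_comm, frobSq]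
  conv_rhs => rw [Finset.sum_comm]
  rw [Finset.mul_sum]
  refine Finset.sum_le_sum fun j _ => ?_
  have : ∀ i, (X * M) i j = (X *ᵥ fun k => M k j) i := fun i => rfl
  simp only [this]
  exact sum_norm_mulVec_sq X _

lemma frobSq_mul_right [DecidableEq α] [DecidableEq β] (M : Matrix γ α ℂ) (X : Matrix α β ℂ) :
    frobSq (M * X) ≤ frobSq M * spec X ^ 2 := by
  have h := frobSq_mul_left Xᴴ Mᴴ
  rw [← conjTranspose_mul, frobSq_conjTranspose, frobSq_conjTranspose,
    spec_conjTranspose] at h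
  linarith

lemma frobSq_split_left [DecidableEq α] {P : Matrix α α ℂ} (hP : P * P = P) (hPh : Pᴴ = P)
    (M : Matrix α β ℂ) : frobSq M = frobSq (P * M) + frobSq ((1 - P) * M) := by
  have hsum : M = P * M + (1 - P) * M := by
    rw [Matrix.sub_mul, Matrix.one_mul]; abel
  have horth : Matrix.trace ((P * M)ᴴ * ((1 - P) * M)) = 0 := by
    have he : (P * M)ᴴ * ((1 - P) * M) = Mᴴ * ((Pᴴ * (1 - P)) * M) := by
      rw [conjTranspose_mul, Matrix.mul_assoc, Matrix.mul_assoc]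
    rw [he, hPh, Matrix.mul_sub, Matrix.mul_one, hP, sub_self]
    simp
  conv_lhs => rw [hsum]
  exact frobSq_add_of_orth horth

lemma frobSq_split_right [DecidableEq β] {Q : Matrix β β ℂ} (hQ : Q * Q = Q) (hQh : Qᴴ = Q)
    (M : Matrix α β ℂ) : frobSq M = frobSq (M * Q) + frobSq (M * (1 - Q)) := by
  have h := frobSq_split_left (P := Qᴴ)
    (by rw [hQh]; exact hQ) (by rw [conjTranspose_conjTranspose, hQh]) Mᴴ
  rw [frobSq_conjTranspose, hQh] at h
  rw [h]
  have e1 : Q * Mᴴ = (M * Q)ᴴ := by rw [conjTranspose_mul, hQh]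
  have e2 : (1 - Q) * Mᴴ = (M * (1 - Q))ᴴ := by
    rw [conjTranspose_mul, conjTranspose_sub, conjTranspose_one, hQh]
  rw [e1, e2, frobSq_conjTranspose, frobSq_conjTranspose]

/-- Swap lemma for projectors of equal trace. -/
lemma frobSq_swap_proj [DecidableEq α] {P Q : Matrix α α ℂ} (hP : P * P = P) (hPh : Pᴴ = P)
    (hQ : Q * Q = Q) (hQh : Qᴴ = Q) (htr : Matrix.trace P = Matrix.trace Q) :
    frobSq ((1 - P) * Q) = frobSq (P * (1 - Q)) := by
  have hPc : (1 - P) * (1 - P) = 1 - P := by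
    rw [Matrix.sub_mul, Matrix.mul_sub, Matrix.mul_sub, Matrix.one_mul, Matrix.mul_one, hP]
    simp only [Matrix.one_mul]; abel
  have hQc : (1 - Q) * (1 - Q) = 1 - Q := by
    rw [Matrix.sub_mul, Matrix.mul_sub, Matrix.mul_sub, Matrix.one_mul, Matrix.mul_one, hQ]
    simp only [Matrix.one_mul]; abel
  rw [frobSq_eq_re_trace, frobSq_eq_re_trace]
  have h1 : ((1 - P) * Q)ᴴ * ((1 - P) * Q) = Q * ((1 - P) * Q) := by
    rw [conjTranspose_mul, conjTranspose_sub, conjTranspose_one, hPh, hQh,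
      Matrix.mul_assoc, ← Matrix.mul_assoc (1 - P) (1 - P), hPc]
  have h2 : (P * (1 - Q))ᴴ * (P * (1 - Q)) = (1 - Q) * (P * (1 - Q)) := by
    rw [conjTranspose_mul, conjTranspose_sub, conjTranspose_one, hPh, hQh,
      Matrix.mul_assoc, ← Matrix.mul_assoc P P, hP]
  rw [h1, h2]
  have t1 : Matrix.trace (Q * ((1 - P) * Q)) = Matrix.trace Q - Matrix.trace (P * Q) := by
    rw [Matrix.sub_mul, Matrix.one_mul, Matrix.mul_sub, trace_sub, hQ]
    congr 1
    rw [Matrix.trace_mul_comm, Matrix.mul_assoc, hQ]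
  have t2 : Matrix.trace ((1 - Q) * (P * (1 - Q))) =
      Matrix.trace P - Matrix.trace (P * Q) := by
    rw [Matrix.trace_mul_comm, Matrix.mul_assoc, hQc, Matrix.mul_sub, Matrix.mul_one,
      trace_sub]
  rw [t1, t2, htr]

lemma trace_idem {k : ℕ} {P : Matrix (Fin k) (Fin k) ℂ} (h : P * P = P) :
    Matrix.trace P = (P.rank : ℂ) := by
  have hproj : LinearMap.IsProj (LinearMap.range P.mulVecLin) P.mulVecLin := by
    constructor
    · intro x; exact LinearMap.mem_range_self _ x
    · rintro x ⟨y, rfl⟩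
      have h2 : P.mulVecLin ∘ₗ P.mulVecLin = P.mulVecLin := by
        rw [← Matrix.mulVecLin_mul, h]
      exact congrFun (congrArg DFunLike.coe h2) y
  have ht := hproj.trace
  have hb : LinearMap.trace ℂ (Fin k → ℂ) P.mulVecLin = Matrix.trace P := by
    rw [LinearMap.trace_eq_matrix_trace ℂ (Pi.basisFun ℂ (Fin k))]
    congr 1
    rw [LinearMap.toMatrix_eq_toMatrix']
    exact LinearMap.toMatrix'_toLin' P
  rw [← hb, ht, Matrix.rank]

set_option maxHeartbeats 1000000 in
lemma key {m n : ℕ} (A B : Matrix (Fin m) (Fin n) ℂ) (Adag Bdag : Matrix (Fin n) (Fin m) ℂ)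
    (hA : IsMoorePenrose A Adag) (hB : IsMoorePenrose B Bdag)
    (hA0 : A ≠ 0) (hB0 : B ≠ 0) (hrank : B.rank = A.rank) :
    frobSq (Bdag - Adag) ≤
      spec Adag ^ 2 * spec Bdag ^ 2
          * (frobSq (B - A) - max (frobSq (B * Bdag * (B - A) * Adag) / spec Adag ^ 2)
              (frobSq (Bdag * (B - A) * Adag * A) / spec Bdag ^ 2))
        + frobSq (Bdag * (B - A) * Adag) := by
  obtain ⟨hA1, hA2, hA3, hA4⟩ := hA
  obtain ⟨hB1, hB2, hB3, hB4⟩ := hB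
  have hAd0 : Adag ≠ 0 := by
    intro h; apply hA0; rw [← hA1, h]; simp
  have hBd0 : Bdag ≠ 0 := by
    intro h; apply hB0; rw [← hB1, h]; simp
  have ha2 : (0:ℝ) < spec Adag ^ 2 := pow_pos (spec_pos hAd0) 2
  have hb2 : (0:ℝ) < spec Bdag ^ 2 := pow_pos (spec_pos hBd0) 2
  -- idempotent projectors
  have hPAi : (A*Adag) * (A*Adag) = A*Adag := by rw [← Matrix.mul_assoc, hA1]
  have hPBi : (B*Bdag) * (B*Bdag) = B*Bdag := by rw [← Matrix.mul_assoc, hB1]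
  have hQAi : (Adag*A) * (Adag*A) = Adag*A := by rw [← Matrix.mul_assoc, hA2]
  have hQBi : (Bdag*B) * (Bdag*B) = Bdag*B := by rw [← Matrix.mul_assoc, hB2]
  -- ranks
  have hrPA : (A*Adag).rank = A.rank := by
    refine le_antisymm (Matrix.rank_mul_le_left A Adag) ?_
    conv_lhs => rw [← hA1]
    exact Matrix.rank_mul_le_left (A*Adag) A
  have hrPB : (B*Bdag).rank = B.rank := by
    refine le_antisymm (Matrix.rank_mul_le_left B Bdag) ?_
    conv_lhs => rw [← hB1]
    exact Matrix.rank_mul_le_left (B*Bdag) B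
  have hrQA : (Adag*A).rank = A.rank := by
    refine le_antisymm (Matrix.rank_mul_le_right Adag A) ?_
    conv_lhs => rw [← hA1]
    rw [Matrix.mul_assoc]
    exact Matrix.rank_mul_le_right A (Adag*A)
  have hrQB : (Bdag*B).rank = B.rank := by
    refine le_antisymm (Matrix.rank_mul_le_right Bdag B) ?_
    conv_lhs => rw [← hB1]
    rw [Matrix.mul_assoc]
    exact Matrix.rank_mul_le_right B (Bdag*B)
  have htrP : Matrix.trace (B*Bdag) = Matrix.trace (A*Adag) := by
    rw [trace_idem hPBi, trace_idem hPAi, hrPB, hrPA, hrank]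
  have htrQ : Matrix.trace (Bdag*B) = Matrix.trace (Adag*A) := by
    rw [trace_idem hQBi, trace_idem hQAi, hrQB, hrQA, hrank]
  -- annihilation facts
  have kA : (1 - A*Adag) * Adagᴴ = 0 := by
    have e : (A*Adag) * Adagᴴ = Adagᴴ := by
      conv_lhs => rw [← hA3]
      rw [← conjTranspose_mul, ← Matrix.mul_assoc, hA2]
    rw [Matrix.sub_mul, Matrix.one_mul, e, sub_self]
  have kB : Bdagᴴ * (1 - Bdag*B) = 0 := by
    have e : Bdagᴴ * (Bdag*B) = Bdagᴴ := by
      conv_lhs => rw [← hB4]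
      rw [← conjTranspose_mul, hB2]
    rw [Matrix.mul_sub, Matrix.mul_one, e, sub_self]
  have zB : (1 - B*Bdag) * B = 0 := by
    rw [Matrix.sub_mul, Matrix.one_mul, hB1, sub_self]
  have zA : A * (1 - Adag*A) = 0 := by
    rw [Matrix.mul_sub, Matrix.mul_one, ← Matrix.mul_assoc, hA1, sub_self]
  -- decomposition
  have hdecomp : Bdag - Adag =
      -(Bdag * (B-A) * Adag) + (Bdag * (1 - A*Adag) + -((1 - Bdag*B) * Adag)) := by
    simp only [Matrix.mul_sub, Matrix.sub_mul, Matrix.mul_one, Matrix.one_mul,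
      Matrix.mul_assoc]
    abel
  -- orthogonality
  have hz : Bdagᴴ * ((1 - Bdag*B) * Adag) = 0 := by
    rw [← Matrix.mul_assoc, kB, Matrix.zero_mul]
  have o_XY : Matrix.trace ((Bdag*(B-A)*Adag)ᴴ * (Bdag*(1 - A*Adag))) = 0 := by
    have hYA : (Bdag*(1 - A*Adag)) * Adagᴴ = 0 := by
      rw [Matrix.mul_assoc, kA, Matrix.mul_zero]
    rw [conjTranspose_mul, Matrix.mul_assoc, Matrix.trace_mul_comm, Matrix.mul_assoc,
      hYA, Matrix.mul_zero, Matrix.trace_zero]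
  have o_XZ : (Bdag*(B-A)*Adag)ᴴ * ((1 - Bdag*B)*Adag) = 0 := by
    rw [conjTranspose_mul, conjTranspose_mul, Matrix.mul_assoc, Matrix.mul_assoc, hz,
      Matrix.mul_zero, Matrix.mul_zero]
  have o_YZ : (Bdag*(1 - A*Adag))ᴴ * ((1 - Bdag*B)*Adag) = 0 := by
    rw [conjTranspose_mul, Matrix.mul_assoc, hz, Matrix.mul_zero]
  have horth1 : Matrix.trace ((-(Bdag*(B-A)*Adag))ᴴ *
      ((Bdag*(1 - A*Adag)) + -((1 - Bdag*B)*Adag))) = 0 := by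
    simp only [conjTranspose_neg, Matrix.neg_mul, Matrix.mul_add, Matrix.mul_neg, o_XZ,
      trace_add, trace_neg, o_XY, neg_zero, add_zero, trace_zero]
  have horth2 : Matrix.trace ((Bdag*(1 - A*Adag))ᴴ * (-((1 - Bdag*B)*Adag))) = 0 := by
    rw [Matrix.mul_neg, o_YZ, neg_zero, trace_zero]
  have hfrob : frobSq (Bdag - Adag) = frobSq (Bdag*(B-A)*Adag)
      + (frobSq (Bdag*(1 - A*Adag)) + frobSq ((1 - Bdag*B)*Adag)) := by
    rw [hdecomp, frobSq_add_of_orth horth1, frobSq_add_of_orth horth2, frobSq_neg,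
      frobSq_neg]
  -- main bounds
  have bY : frobSq (Bdag*(1 - A*Adag)) ≤
      spec Bdag^2 * frobSq ((1 - B*Bdag) * ((B-A) * Adag)) := by
    have yb : Bdag * ((B*Bdag) * (1 - A*Adag)) = Bdag*(1 - A*Adag) := by
      rw [← Matrix.mul_assoc, ← Matrix.mul_assoc, hB2]
    have swapped : frobSq ((B*Bdag)*(1 - A*Adag)) = frobSq ((1 - B*Bdag)*(A*Adag)) :=
      (frobSq_swap_proj hPBi hB3 hPAi hA3 htrP).symm
    have hEB : (1 - B*Bdag)*(B-A) = -((1 - B*Bdag)*A) := by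
      rw [Matrix.mul_sub, zB, zero_sub]
    have neg4 : (1 - B*Bdag)*(A*Adag) = -((1 - B*Bdag)*((B-A)*Adag)) :=
      calc (1 - B*Bdag)*(A*Adag) = ((1 - B*Bdag)*A)*Adag := by rw [Matrix.mul_assoc]
      _ = -(((1 - B*Bdag)*(B-A))*Adag) := by rw [hEB, Matrix.neg_mul, neg_neg]
      _ = -((1 - B*Bdag)*((B-A)*Adag)) := by rw [Matrix.mul_assoc]
    calc frobSq (Bdag*(1 - A*Adag)) = frobSq (Bdag*((B*Bdag)*(1 - A*Adag))) := by rw [yb]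
    _ ≤ spec Bdag^2 * frobSq ((B*Bdag)*(1 - A*Adag)) := frobSq_mul_left _ _
    _ = spec Bdag^2 * frobSq ((1 - B*Bdag)*((B-A)*Adag)) := by
        rw [swapped, neg4, frobSq_neg]
  have bZ : frobSq ((1 - Bdag*B)*Adag) ≤
      frobSq (Bdag*((B-A)*(1 - Adag*A))) * spec Adag^2 := by
    have zb : ((1 - Bdag*B)*(Adag*A))*Adag = (1 - Bdag*B)*Adag := by
      rw [Matrix.mul_assoc, hA2]
    have swapped2 : frobSq ((1 - Bdag*B)*(Adag*A)) = frobSq ((Bdag*B)*(1 - Adag*A)) :=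
      frobSq_swap_proj hQBi hB4 hQAi hA4 htrQ
    have e5 : (Bdag*B)*(1 - Adag*A) = Bdag*((B-A)*(1 - Adag*A)) := by
      rw [Matrix.mul_assoc]
      congr 1
      rw [Matrix.sub_mul, zA, sub_zero]
    calc frobSq ((1 - Bdag*B)*Adag) = frobSq (((1 - Bdag*B)*(Adag*A))*Adag) := by rw [zb]
    _ ≤ frobSq ((1 - Bdag*B)*(Adag*A)) * spec Adag^2 := frobSq_mul_right _ _
    _ = frobSq (Bdag*((B-A)*(1 - Adag*A))) * spec Adag^2 := by rw [swapped2, e5]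
  -- splits
  have sEA : frobSq ((B-A)*Adag) = frobSq ((B*Bdag)*((B-A)*Adag))
      + frobSq ((1 - B*Bdag)*((B-A)*Adag)) := frobSq_split_left hPBi hB3 _
  have sE_QA : frobSq (B-A) = frobSq ((B-A)*(Adag*A)) + frobSq ((B-A)*(1 - Adag*A)) :=
    frobSq_split_right hQAi hA4 _
  have sBdE : frobSq (Bdag*(B-A)) = frobSq ((Bdag*(B-A))*(Adag*A))
      + frobSq ((Bdag*(B-A))*(1 - Adag*A)) := frobSq_split_right hQAi hA4 _
  have sE_PB : frobSq (B-A) = frobSq ((B*Bdag)*(B-A)) + frobSq ((1 - B*Bdag)*(B-A)) :=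
    frobSq_split_left hPBi hB3 _
  -- auxiliary inequalities
  have eEA : frobSq ((B-A)*Adag) ≤ frobSq ((B-A)*(Adag*A)) * spec Adag^2 := by
    have e : ((B-A)*(Adag*A))*Adag = (B-A)*Adag := by rw [Matrix.mul_assoc, hA2]
    calc frobSq ((B-A)*Adag) = frobSq (((B-A)*(Adag*A))*Adag) := by rw [e]
    _ ≤ frobSq ((B-A)*(Adag*A)) * spec Adag^2 := frobSq_mul_right _ _
  have eZb : frobSq (Bdag*((B-A)*(1 - Adag*A))) ≤
      spec Bdag^2 * frobSq ((B-A)*(1 - Adag*A)) := frobSq_mul_left _ _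
  have eBdE : frobSq (Bdag*(B-A)) ≤ spec Bdag^2 * frobSq ((B*Bdag)*(B-A)) := by
    have e : Bdag*((B*Bdag)*(B-A)) = Bdag*(B-A) := by
      rw [← Matrix.mul_assoc, ← Matrix.mul_assoc, hB2]
    calc frobSq (Bdag*(B-A)) = frobSq (Bdag*((B*Bdag)*(B-A))) := by rw [e]
    _ ≤ spec Bdag^2 * frobSq ((B*Bdag)*(B-A)) := frobSq_mul_left _ _
  have eYb : frobSq ((1 - B*Bdag)*((B-A)*Adag)) ≤
      frobSq ((1 - B*Bdag)*(B-A)) * spec Adag^2 := by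
    rw [← Matrix.mul_assoc]
    exact frobSq_mul_right _ _
  have eZ2 : frobSq (Bdag*((B-A)*(1 - Adag*A))) =
      frobSq ((Bdag*(B-A))*(1 - Adag*A)) := by rw [Matrix.mul_assoc]
  -- arm alpha
  have hY' : frobSq (Bdag*(1 - A*Adag)) ≤
      spec Bdag^2 * (frobSq ((B-A)*(Adag*A)) * spec Adag^2
        - frobSq ((B*Bdag)*((B-A)*Adag))) := by
    refine bY.trans (mul_le_mul_of_nonneg_left ?_ hb2.le)
    linarith [sEA, eEA]
  have hZ' : frobSq ((1 - Bdag*B)*Adag) ≤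
      spec Bdag^2 * frobSq ((B-A)*(1 - Adag*A)) * spec Adag^2 :=
    bZ.trans (mul_le_mul_of_nonneg_right eZb ha2.le)
  have armA : frobSq (Bdag*(1 - A*Adag)) + frobSq ((1 - Bdag*B)*Adag) ≤
      spec Adag^2 * spec Bdag^2 * frobSq (B-A)
        - spec Bdag^2 * frobSq ((B*Bdag)*((B-A)*Adag)) := by
    have sE_QA' : spec Adag^2 * spec Bdag^2 * frobSq (B-A) =
        spec Adag^2 * spec Bdag^2 * frobSq ((B-A)*(Adag*A))
          + spec Adag^2 * spec Bdag^2 * frobSq ((B-A)*(1 - Adag*A)) := by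
      rw [sE_QA]; ring
    linarith [hY', hZ', sE_QA']
  -- arm beta
  have hY2 : frobSq (Bdag*(1 - A*Adag)) ≤
      spec Bdag^2 * (frobSq ((1 - B*Bdag)*(B-A)) * spec Adag^2) :=
    bY.trans (mul_le_mul_of_nonneg_left eYb hb2.le)
  have hZ2 : frobSq ((1 - Bdag*B)*Adag) ≤
      (frobSq (Bdag*(B-A)) - frobSq ((Bdag*(B-A))*(Adag*A))) * spec Adag^2 := by
    refine bZ.trans (mul_le_mul_of_nonneg_right ?_ ha2.le)
    rw [eZ2]
    linarith [sBdE]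
  have hq' : spec Adag^2 * frobSq (Bdag*(B-A)) ≤
      spec Adag^2 * (spec Bdag^2 * frobSq ((B*Bdag)*(B-A))) :=
    mul_le_mul_of_nonneg_left eBdE ha2.le
  have armB : frobSq (Bdag*(1 - A*Adag)) + frobSq ((1 - Bdag*B)*Adag) ≤
      spec Adag^2 * spec Bdag^2 * frobSq (B-A)
        - spec Adag^2 * frobSq ((Bdag*(B-A))*(Adag*A)) := by
    have sE_PB' : spec Adag^2 * spec Bdag^2 * frobSq (B-A) =
        spec Adag^2 * spec Bdag^2 * frobSq ((B*Bdag)*(B-A))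
          + spec Adag^2 * spec Bdag^2 * frobSq ((1 - B*Bdag)*(B-A)) := by
      rw [sE_PB]; ring
    linarith [hY2, hZ2, hq', sE_PB']
  -- assembly
  have assoc1 : B*Bdag*(B-A)*Adag = (B*Bdag)*((B-A)*Adag) := Matrix.mul_assoc _ _ _
  have assoc2 : Bdag*(B-A)*Adag*A = (Bdag*(B-A))*(Adag*A) := Matrix.mul_assoc _ _ _
  rcases max_choice (frobSq (B * Bdag * (B - A) * Adag) / spec Adag ^ 2)
      (frobSq (Bdag * (B - A) * Adag * A) / spec Bdag ^ 2) with hmax | hmax <;> rw [hmax]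
  · have hdiv : spec Adag ^ 2 * spec Bdag ^ 2
        * (frobSq (B - A) - frobSq (B * Bdag * (B - A) * Adag) / spec Adag ^ 2) =
        spec Adag^2 * spec Bdag^2 * frobSq (B-A)
          - spec Bdag^2 * frobSq ((B*Bdag)*((B-A)*Adag)) := by
      rw [assoc1] at *
      rw [mul_sub, mul_div_assoc']; congr 1; rw [div_eq_iff ha2.ne']; ring
    rw [hdiv, hfrob]
    linarith [armA]
  · have hdiv : spec Adag ^ 2 * spec Bdag ^ 2
        * (frobSq (B - A) - frobSq (Bdag * (B - A) * Adag * A) / spec Bdag ^ 2) =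
        spec Adag^2 * spec Bdag^2 * frobSq (B-A)
          - spec Adag^2 * frobSq ((Bdag*(B-A))*(Adag*A)) := by
      rw [assoc2] at *
      rw [mul_sub, mul_div_assoc']; congr 1; rw [div_eq_iff hb2.ne']; ring
    rw [hdiv, hfrob]
    linarith [armB]

theorem stmt6 {m n : ℕ}
    (A B : Matrix (Fin m) (Fin n) ℂ)
    (Adag Bdag : Matrix (Fin n) (Fin m) ℂ)
    (hA : IsMoorePenrose A Adag) (hB : IsMoorePenrose B Bdag)
    (E : Matrix (Fin m) (Fin n) ℂ) (hE : E = B - A)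
    (hA0 : A ≠ 0) (hB0 : B ≠ 0)
    (hrank : B.rank = A.rank)
    :
    frobSq (Bdag - Adag) ≤
      min
        (spec Adag ^ 2 * spec Bdag ^ 2
            * (frobSq E - max (frobSq (B * Bdag * E * Adag) / spec Adag ^ 2)
                (frobSq (Bdag * E * Adag * A) / spec Bdag ^ 2))
          + frobSq (Bdag * E * Adag))
        (spec Adag ^ 2 * spec Bdag ^ 2
            * (frobSq E - max (frobSq (A * Adag * E * Bdag) / spec Bdag ^ 2)
                (frobSq (Adag * E * Bdag * B) / spec Adag ^ 2))
          + frobSq (Adag * E * Bdag)) := by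
  subst hE
  refine le_min (key A B Adag Bdag hA hB hA0 hB0 hrank) ?_
  have h2 := key B A Bdag Adag hB hA hB0 hA0 hrank.symm
  rw [← neg_sub B A, ← neg_sub Bdag Adag] at h2
  simp only [Matrix.mul_neg, Matrix.neg_mul, frobSq_neg] at h2
  rw [mul_comm (spec Bdag ^ 2) (spec Adag ^ 2)] at h2
  exact h2
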